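/- The function f(θ) = C / [(1+ρ₁² − 2ρ₁cos(θ−μ₁))(1+ρ₂² − 2ρ₂cos(θ−μ₂))] integrates to 1 over [−π, π), where C = (1−ρ₁²)(1−ρ₂²)(1+ρ₁²ρ₂² − 2ρ₁ρ₂cos(μ₁−μ₂)) / (2π(1−ρ₁²ρ₂²)). -/

import Mathlib

open Real intervalIntegral

/-- Normalizing constant of the extended wrapped Cauchy (EWC) distribution. -/
noncomputable def ewcC (μ₁ μ₂ ρ₁ ρ₂ : ℝ) : ℝ :=
  (1 - ρ₁ ^ 2) * (1 - ρ₂ ^ 2) * (1 + ρ₁ ^ 2 * ρ₂ ^ 2 - 2 * ρ₁ * ρ₂ * Real.cos (μ₁ - μ₂)) /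
    (2 * Real.pi * (1 - ρ₁ ^ 2 * ρ₂ ^ 2))

open Complex Metric in
lemma ewc_ne {a : ℂ} (z : ℂ) (ha : ‖a‖ < 1) (hz : ‖z‖ ≤ 1) :
    (1 : ℂ) - (starRingEnd ℂ) a * z ≠ 0 := by
  intro h
  have h1 : (starRingEnd ℂ) a * z = 1 := by linear_combination -h
  have h2 : ‖(starRingEnd ℂ) a * z‖ < 1 := by
    rw [norm_mul, Complex.norm_conj]
    calc ‖a‖ * ‖z‖ ≤ ‖a‖ * 1 :=
      mul_le_mul_of_nonneg_left hz (norm_nonneg a)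
    _ < 1 := by simpa using ha
  rw [h1] at h2; simp at h2

-- step 1 : circle integral equals I * real integral
lemma ewc_step1 (a b : ℂ) (ha : ‖a‖ < 1) (hb : ‖b‖ < 1) :
    (∮ z in C(0, 1), z * ((1 - (starRingEnd ℂ) a * z) * (1 - (starRingEnd ℂ) b * z)
        * (z - a) * (z - b))⁻¹)
      = Complex.I * ((∫ θ in (0:ℝ)..(2*Real.pi),
          ((‖circleMap 0 1 θ - a‖)^2 * (‖circleMap 0 1 θ - b‖)^2)⁻¹ : ℝ) : ℂ) := by
  have hcast : ∀ (f : ℝ → ℝ), (∫ x in (0:ℝ)..(2*Real.pi), (f x : ℂ)) = ((∫ x in (0:ℝ)..(2*Real.pi), f x : ℝ) : ℂ) :=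
    fun f => by exact_mod_cast RCLike.intervalIntegral_ofReal (𝕜 := ℂ) (f := f)
  rw [← hcast, ← intervalIntegral.integral_const_mul]
  simp only [circleIntegral, deriv_circleMap, smul_eq_mul]
  refine intervalIntegral.integral_congr fun θ _ => ?_
  set z := circleMap 0 1 θ with hzdef
  have habs : ‖z‖ = 1 := by simp [hzdef, circleMap]
  have hz0 : z ≠ 0 := by intro h; rw [h] at habs; simp at habs
  have hcz : (starRingEnd ℂ) z = z⁻¹ := (RCLike.inv_eq_conj habs).symm
  have hza : z - a ≠ 0 := sub_ne_zero.2 fun h => by rw [← h, habs] at ha; exact lt_irrefl 1 ha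
  have hzb : z - b ≠ 0 := sub_ne_zero.2 fun h => by rw [← h, habs] at hb; exact lt_irrefl 1 hb
  have h1a : (1:ℂ) - (starRingEnd ℂ) a * z ≠ 0 := ewc_ne z ha habs.le
  have h1b : (1:ℂ) - (starRingEnd ℂ) b * z ≠ 0 := ewc_ne z hb habs.le
  rw [Complex.ofReal_inv, Complex.ofReal_mul, Complex.ofReal_pow, Complex.ofReal_pow]
  have hc1 : ((‖z - a‖ : ℝ) : ℂ)^2 = ((Complex.normSq (z-a) : ℝ) : ℂ) := by
    rw [← Complex.sq_norm]; push_cast; ring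
  have hc2 : ((‖z - b‖ : ℝ) : ℂ)^2 = ((Complex.normSq (z-b) : ℝ) : ℂ) := by
    rw [← Complex.sq_norm]; push_cast; ring
  rw [hc1, hc2, ← Complex.mul_conj, ← Complex.mul_conj]
  have expand : ((z - a) * (starRingEnd ℂ) (z-a) * ((z - b) * (starRingEnd ℂ) (z-b)))⁻¹
      = z^2 * ((1 - (starRingEnd ℂ) a * z) * (1 - (starRingEnd ℂ) b * z) * (z - a) * (z - b))⁻¹ := by
    rw [map_sub, map_sub, hcz]
    have hkey : (z - a) * (z⁻¹ - (starRingEnd ℂ) a) * ((z - b) * (z⁻¹ - (starRingEnd ℂ) b))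
        = ((1 - (starRingEnd ℂ) a * z) * (1 - (starRingEnd ℂ) b * z) * (z - a) * (z - b)) / z^2 := by
      field_simp
    rw [hkey]
    rw [inv_div, div_eq_mul_inv]
  rw [expand]
  ring

open Complex Metric in
set_option maxHeartbeats 1000000 in
lemma ewc_step2 (a b : ℂ) (ha : ‖a‖ < 1) (hb : ‖b‖ < 1) :
    (∮ z in C(0, 1), z * ((1 - (starRingEnd ℂ) a * z) * (1 - (starRingEnd ℂ) b * z)
        * (z - a) * (z - b))⁻¹)
      = (2 * Real.pi * Complex.I) *
        ((1 - (starRingEnd ℂ) a * a * ((starRingEnd ℂ) b * b)) *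
          ((1 - (starRingEnd ℂ) a * a) * (1 - (starRingEnd ℂ) b * b) *
            ((1 - (starRingEnd ℂ) a * b) * (1 - (starRingEnd ℂ) b * a)))⁻¹) := by
  have haa : (1:ℂ) - (starRingEnd ℂ) a * a ≠ 0 := ewc_ne a ha ha.le
  have hbb : (1:ℂ) - (starRingEnd ℂ) b * b ≠ 0 := ewc_ne b hb hb.le
  have hab : (1:ℂ) - (starRingEnd ℂ) a * b ≠ 0 := ewc_ne b ha hb.le
  have hba : (1:ℂ) - (starRingEnd ℂ) b * a ≠ 0 := ewc_ne a hb ha.le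
  have hamem : a ∈ ball (0:ℂ) 1 := by simpa [mem_ball] using ha
  have hbmem : b ∈ ball (0:ℂ) 1 := by simpa [mem_ball] using hb
  -- differentiability of h on the closed ball
  have hdiffh : DifferentiableOn ℂ
      (fun z => z * ((1 - (starRingEnd ℂ) a * z) * (1 - (starRingEnd ℂ) b * z))⁻¹)
      (closedBall (0:ℂ) 1) := by
    refine DifferentiableOn.mul differentiable_id.differentiableOn (DifferentiableOn.inv ?_ ?_)
    · exact (((differentiable_const _).sub ((differentiable_const _).mul differentiable_id)).mul
        ((differentiable_const _).sub ((differentiable_const _).mul differentiable_id))).differentiableOn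
    · intro z hz
      have hz1 : ‖z‖ ≤ 1 := by simpa [mem_closedBall] using hz
      exact mul_ne_zero (ewc_ne z ha hz1) (ewc_ne z hb hz1)
  rcases eq_or_ne a b with rfl | hne
  · -- double pole case
    set U : Set ℂ := {z : ℂ | (1:ℂ) - (starRingEnd ℂ) a * z ≠ 0} with hU
    have hUopen : IsOpen U := isOpen_ne_fun (by fun_prop) continuous_const
    have hUsub : closedBall (0:ℂ) 1 ⊆ U := fun z hz =>
      ewc_ne z ha (by simpa [mem_closedBall] using hz)
    have hdiffU : DifferentiableOn ℂ
        (fun z => z * ((1 - (starRingEnd ℂ) a * z) * (1 - (starRingEnd ℂ) a * z))⁻¹) U := by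
      refine DifferentiableOn.mul differentiable_id.differentiableOn (DifferentiableOn.inv ?_ ?_)
      · exact (((differentiable_const _).sub ((differentiable_const _).mul differentiable_id)).mul
          ((differentiable_const _).sub ((differentiable_const _).mul differentiable_id))).differentiableOn
      · exact fun z hz => mul_ne_zero hz hz
    have hC := Complex.two_pi_I_inv_smul_circleIntegral_sub_sq_inv_smul_of_differentiable
      hUopen hUsub hdiffU hamem
    -- derivative value
    have hd1 : HasDerivAt (fun z : ℂ => 1 - (starRingEnd ℂ) a * z) (-((starRingEnd ℂ) a)) a := by
      simpa using ((hasDerivAt_id a).const_mul ((starRingEnd ℂ) a)).const_sub 1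
    have hd2 := (hd1.mul hd1).inv (mul_ne_zero haa haa)
    have hd3 := (hasDerivAt_id a).mul hd2
    simp only [id_eq, Pi.mul_def, Pi.inv_def] at hd3
    have hderiv : deriv (fun z => z * ((1 - (starRingEnd ℂ) a * z) * (1 - (starRingEnd ℂ) a * z))⁻¹) a
        = (1 - (starRingEnd ℂ) a * a * ((starRingEnd ℂ) a * a)) *
          ((1 - (starRingEnd ℂ) a * a) * (1 - (starRingEnd ℂ) a * a) *
            ((1 - (starRingEnd ℂ) a * a) * (1 - (starRingEnd ℂ) a * a)))⁻¹ := by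
      rw [hd3.deriv]
      field_simp
      ring
    have h2pi : (2 * (Real.pi:ℂ) * Complex.I) ≠ 0 := by
      simp [Real.pi_ne_zero, Complex.I_ne_zero]
    have hgeq : ∀ z : ℂ, z * ((1 - (starRingEnd ℂ) a * z) * (1 - (starRingEnd ℂ) a * z)
        * (z - a) * (z - a))⁻¹
        = ((z - a)^2)⁻¹ • (z * ((1 - (starRingEnd ℂ) a * z) * (1 - (starRingEnd ℂ) a * z))⁻¹) := by
      intro z; simp only [smul_eq_mul, mul_inv, sq]; ring
    calc (∮ z in C(0, 1), z * ((1 - (starRingEnd ℂ) a * z) * (1 - (starRingEnd ℂ) a * z)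
        * (z - a) * (z - a))⁻¹)
        = ∮ z in C(0, 1), ((z - a)^2)⁻¹ • (z * ((1 - (starRingEnd ℂ) a * z)
          * (1 - (starRingEnd ℂ) a * z))⁻¹) := congrArg (fun f => circleIntegral f 0 1) (funext hgeq)
      _ = (2 * (Real.pi:ℂ) * Complex.I) • ((2 * (Real.pi:ℂ) * Complex.I)⁻¹ •
            ∮ z in C(0, 1), ((z - a)^2)⁻¹ • (z * ((1 - (starRingEnd ℂ) a * z)
              * (1 - (starRingEnd ℂ) a * z))⁻¹)) := (smul_inv_smul₀ h2pi _).symm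
      _ = (2 * (Real.pi:ℂ) * Complex.I) • deriv (fun z => z * ((1 - (starRingEnd ℂ) a * z)
            * (1 - (starRingEnd ℂ) a * z))⁻¹) a := by rw [hC]
      _ = (2 * Real.pi * Complex.I) *
          ((1 - (starRingEnd ℂ) a * a * ((starRingEnd ℂ) a * a)) *
            ((1 - (starRingEnd ℂ) a * a) * (1 - (starRingEnd ℂ) a * a) *
              ((1 - (starRingEnd ℂ) a * a) * (1 - (starRingEnd ℂ) a * a)))⁻¹) := by
          rw [hderiv, smul_eq_mul]
  · -- simple poles
    have hCa := hdiffh.circleIntegral_sub_inv_smul hamem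
    have hCb := hdiffh.circleIntegral_sub_inv_smul hbmem
    have habs1 : ∀ z ∈ sphere (0:ℂ) 1, ‖z‖ = 1 := fun z hz => by
      simpa using mem_sphere_zero_iff_norm.mp hz
    have hconth : ContinuousOn
        (fun z => z * ((1 - (starRingEnd ℂ) a * z) * (1 - (starRingEnd ℂ) b * z))⁻¹)
        (sphere (0:ℂ) 1) := by
      refine continuousOn_id.mul (ContinuousOn.inv₀ (by fun_prop) fun z hz => ?_)
      exact mul_ne_zero (ewc_ne z ha (habs1 z hz).le) (ewc_ne z hb (habs1 z hz).le)
    have hzw : ∀ w : ℂ, ‖w‖ < 1 → ∀ z ∈ sphere (0:ℂ) 1, z - w ≠ 0 := by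
      intro w hw z hz
      refine sub_ne_zero.2 fun h => ?_
      rw [← h, habs1 z hz] at hw
      exact lt_irrefl 1 hw
    have hinta : CircleIntegrable (fun z => (z - a)⁻¹ •
        (z * ((1 - (starRingEnd ℂ) a * z) * (1 - (starRingEnd ℂ) b * z))⁻¹)) 0 1 := by
      refine ContinuousOn.circleIntegrable (by norm_num) ?_
      exact ((continuousOn_id.sub continuousOn_const).inv₀
        (fun z hz => hzw a ha z hz)).smul hconth
    have hintb : CircleIntegrable (fun z => (z - b)⁻¹ •
        (z * ((1 - (starRingEnd ℂ) a * z) * (1 - (starRingEnd ℂ) b * z))⁻¹)) 0 1 := by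
      refine ContinuousOn.circleIntegrable (by norm_num) ?_
      exact ((continuousOn_id.sub continuousOn_const).inv₀
        (fun z hz => hzw b hb z hz)).smul hconth
    have heq : Set.EqOn
        (fun z => z * ((1 - (starRingEnd ℂ) a * z) * (1 - (starRingEnd ℂ) b * z)
          * (z - a) * (z - b))⁻¹)
        (fun z => (a - b)⁻¹ • ((z - a)⁻¹ •
            (z * ((1 - (starRingEnd ℂ) a * z) * (1 - (starRingEnd ℂ) b * z))⁻¹)
          - (z - b)⁻¹ •
            (z * ((1 - (starRingEnd ℂ) a * z) * (1 - (starRingEnd ℂ) b * z))⁻¹)))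
        (sphere (0:ℂ) 1) := by
      intro z hz
      have h1a : (1:ℂ) - (starRingEnd ℂ) a * z ≠ 0 := ewc_ne z ha (habs1 z hz).le
      have h1b : (1:ℂ) - (starRingEnd ℂ) b * z ≠ 0 := ewc_ne z hb (habs1 z hz).le
      have hza := hzw a ha z hz
      have hzb := hzw b hb z hz
      have hne' : a - b ≠ 0 := sub_ne_zero.2 hne
      simp only [smul_eq_mul]
      have hid : (z - a)⁻¹ - (z - b)⁻¹ = (a - b) * ((z - a) * (z - b))⁻¹ := by
        field_simp
        ring
      rw [← sub_mul, hid, mul_assoc (a - b), ← mul_assoc (a - b)⁻¹,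
        inv_mul_cancel₀ hne', one_mul]
      simp only [mul_inv]
      ring
    rw [circleIntegral.integral_congr (by norm_num) heq,
        circleIntegral.integral_smul,
        circleIntegral.integral_sub hinta hintb, hCa, hCb]
    have hne' : a - b ≠ 0 := sub_ne_zero.2 hne
    have hres : (a - b)⁻¹ * (a * ((1 - (starRingEnd ℂ) a * a) * (1 - (starRingEnd ℂ) b * a))⁻¹
          - b * ((1 - (starRingEnd ℂ) a * b) * (1 - (starRingEnd ℂ) b * b))⁻¹)
        = (1 - (starRingEnd ℂ) a * a * ((starRingEnd ℂ) b * b)) *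
          ((1 - (starRingEnd ℂ) a * a) * (1 - (starRingEnd ℂ) b * b) *
            ((1 - (starRingEnd ℂ) a * b) * (1 - (starRingEnd ℂ) b * a)))⁻¹ := by
      rw [inv_mul_eq_iff_eq_mul₀ hne', ← div_eq_mul_inv, ← div_eq_mul_inv, ← div_eq_mul_inv,
        div_sub_div _ _ (mul_ne_zero haa hba) (mul_ne_zero hab hbb),
        div_eq_iff (mul_ne_zero (mul_ne_zero haa hba) (mul_ne_zero hab hbb)), ← mul_div_assoc,
        div_mul_eq_mul_div, eq_div_iff (mul_ne_zero (mul_ne_zero haa hbb) (mul_ne_zero hab hba))]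
      ring
    simp only [smul_eq_mul]
    linear_combination (2 * (Real.pi:ℂ) * Complex.I) * hres

open Complex Metric in
lemma ewc_circle (a b : ℂ) (ha : ‖a‖ < 1) (hb : ‖b‖ < 1) :
    (∫ θ in (0:ℝ)..(2*Real.pi),
        ((‖circleMap 0 1 θ - a‖)^2 * (‖circleMap 0 1 θ - b‖)^2)⁻¹)
      = 2*Real.pi*(1 - (‖a‖)^2*(‖b‖)^2) /
        ((1-(‖a‖)^2) * (1-(‖b‖)^2)
          * (‖1 - (starRingEnd ℂ) a * b‖)^2) := by
  have haa : (1:ℂ) - (starRingEnd ℂ) a * a ≠ 0 := ewc_ne a ha ha.le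
  have hbb : (1:ℂ) - (starRingEnd ℂ) b * b ≠ 0 := ewc_ne b hb hb.le
  have hab : (1:ℂ) - (starRingEnd ℂ) a * b ≠ 0 := ewc_ne b ha hb.le
  have hba : (1:ℂ) - (starRingEnd ℂ) b * a ≠ 0 := ewc_ne a hb ha.le
  have key : ((∫ θ in (0:ℝ)..(2*Real.pi),
      ((‖circleMap 0 1 θ - a‖)^2 * (‖circleMap 0 1 θ - b‖)^2)⁻¹ : ℝ) : ℂ)
      = (2 * Real.pi) *
        ((1 - (starRingEnd ℂ) a * a * ((starRingEnd ℂ) b * b)) *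
          ((1 - (starRingEnd ℂ) a * a) * (1 - (starRingEnd ℂ) b * b) *
            ((1 - (starRingEnd ℂ) a * b) * (1 - (starRingEnd ℂ) b * a)))⁻¹) := by
    apply mul_left_cancel₀ Complex.I_ne_zero
    rw [← ewc_step1 a b ha hb, ewc_step2 a b ha hb]
    ring
  apply Complex.ofReal_injective
  rw [key]
  simp only [Complex.ofReal_div, Complex.ofReal_mul, Complex.ofReal_sub, Complex.ofReal_one,
    Complex.ofReal_pow, Complex.ofReal_ofNat]
  rw [show ((‖a‖ : ℝ):ℂ)^2 = a * (starRingEnd ℂ) a by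
      rw [← Complex.ofReal_pow, Complex.sq_norm, Complex.mul_conj],
    show ((‖b‖ : ℝ):ℂ)^2 = b * (starRingEnd ℂ) b by
      rw [← Complex.ofReal_pow, Complex.sq_norm, Complex.mul_conj],
    show ((‖1 - (starRingEnd ℂ) a * b‖ : ℝ):ℂ)^2
        = (1 - (starRingEnd ℂ) a * b) * (1 - (starRingEnd ℂ) b * a) by
      rw [← Complex.ofReal_pow, Complex.sq_norm, ← Complex.mul_conj]
      rw [map_sub, map_one, map_mul, Complex.conj_conj]
      ring]
  have haa' : (1:ℂ) - a * (starRingEnd ℂ) a ≠ 0 := by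
    rw [mul_comm]; exact haa
  have hbb' : (1:ℂ) - b * (starRingEnd ℂ) b ≠ 0 := by
    rw [mul_comm]; exact hbb
  rw [div_eq_mul_inv]
  ring_nf

open Complex Metric in
lemma ewc_abs_sq (θ μ ρ : ℝ) :
    (‖circleMap 0 1 θ - (ρ:ℂ) * Complex.exp (μ * Complex.I)‖)^2
      = 1 + ρ^2 - 2*ρ*Real.cos (θ - μ) := by
  rw [Complex.sq_norm, Complex.normSq_apply]
  simp [circleMap, Complex.exp_ofReal_mul_I_re, Complex.exp_ofReal_mul_I_im]
  rw [Real.cos_sub]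
  linear_combination (Real.sin_sq_add_cos_sq θ) + ρ^2 * (Real.sin_sq_add_cos_sq μ)

lemma ewc_abs_K (μ₁ μ₂ ρ₁ ρ₂ : ℝ) :
    (‖1 - (starRingEnd ℂ) ((ρ₁:ℂ) * Complex.exp (μ₁ * Complex.I))
        * ((ρ₂:ℂ) * Complex.exp (μ₂ * Complex.I))‖)^2
      = 1 + ρ₁^2*ρ₂^2 - 2*ρ₁*ρ₂*Real.cos (μ₁ - μ₂) := by
  rw [Complex.sq_norm, Complex.normSq_apply]
  simp [Complex.exp_ofReal_mul_I_re, Complex.exp_ofReal_mul_I_im, Complex.mul_re, Complex.mul_im,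
    Complex.sub_re, Complex.sub_im]
  rw [Real.cos_sub]
  linear_combination (ρ₁^2*ρ₂^2*(Real.sin μ₂^2 + Real.cos μ₂^2)) * Real.sin_sq_add_cos_sq μ₁
    + (ρ₁^2*ρ₂^2) * Real.sin_sq_add_cos_sq μ₂


open Complex Metric in
/-- The EWC density integrates to 1 over `[-π, π)`. -/
theorem ewc_integral_eq_one (μ₁ μ₂ ρ₁ ρ₂ : ℝ)
    (hμ₁ : μ₁ ∈ Set.Ico (-Real.pi) Real.pi) (hμ₂ : μ₂ ∈ Set.Ico (-Real.pi) Real.pi)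
    (hρ₁ : ρ₁ ∈ Set.Ico (0 : ℝ) 1) (hρ₂ : ρ₂ ∈ Set.Ico (0 : ℝ) 1) :
    ∫ θ in (-Real.pi)..Real.pi,
      ewcC μ₁ μ₂ ρ₁ ρ₂ *
        ((1 + ρ₁ ^ 2 - 2 * ρ₁ * Real.cos (θ - μ₁)) *
          (1 + ρ₂ ^ 2 - 2 * ρ₂ * Real.cos (θ - μ₂)))⁻¹ = 1 := by
  obtain ⟨hρ₁0, hρ₁1⟩ := hρ₁
  obtain ⟨hρ₂0, hρ₂1⟩ := hρ₂
  have hπ : (0:ℝ) < Real.pi := Real.pi_pos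
  set a : ℂ := (ρ₁:ℂ) * Complex.exp (μ₁ * Complex.I) with hadef
  set b : ℂ := (ρ₂:ℂ) * Complex.exp (μ₂ * Complex.I) with hbdef
  have hAa : ‖a‖ = ρ₁ := by
    rw [hadef, norm_mul, Complex.norm_real, Complex.norm_exp_ofReal_mul_I, mul_one,
      Real.norm_of_nonneg hρ₁0]
  have hAb : ‖b‖ = ρ₂ := by
    rw [hbdef, norm_mul, Complex.norm_real, Complex.norm_exp_ofReal_mul_I, mul_one,
      Real.norm_of_nonneg hρ₂0]
  have ha : ‖a‖ < 1 := by rw [hAa]; exact hρ₁1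
  have hb : ‖b‖ < 1 := by rw [hAb]; exact hρ₂1
  -- shift the interval of integration
  have hper : Function.Periodic (fun θ => ewcC μ₁ μ₂ ρ₁ ρ₂ *
      ((1 + ρ₁ ^ 2 - 2 * ρ₁ * Real.cos (θ - μ₁)) *
        (1 + ρ₂ ^ 2 - 2 * ρ₂ * Real.cos (θ - μ₂)))⁻¹) (2*Real.pi) := by
    intro x
    simp only
    rw [show x + 2*Real.pi - μ₁ = (x - μ₁) + 2*Real.pi by ring,
        show x + 2*Real.pi - μ₂ = (x - μ₂) + 2*Real.pi by ring,
        Real.cos_add_two_pi, Real.cos_add_two_pi]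
  have hshift : (∫ θ in (-Real.pi)..Real.pi,
      ewcC μ₁ μ₂ ρ₁ ρ₂ *
        ((1 + ρ₁ ^ 2 - 2 * ρ₁ * Real.cos (θ - μ₁)) *
          (1 + ρ₂ ^ 2 - 2 * ρ₂ * Real.cos (θ - μ₂)))⁻¹)
      = ∫ θ in (0:ℝ)..(2*Real.pi),
        ewcC μ₁ μ₂ ρ₁ ρ₂ *
          ((1 + ρ₁ ^ 2 - 2 * ρ₁ * Real.cos (θ - μ₁)) *
            (1 + ρ₂ ^ 2 - 2 * ρ₂ * Real.cos (θ - μ₂)))⁻¹ := by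
    have h := hper.intervalIntegral_add_eq (-Real.pi) 0
    rw [show -Real.pi + 2*Real.pi = Real.pi by ring, zero_add] at h
    exact h
  rw [hshift, intervalIntegral.integral_const_mul]
  have hcongr : (∫ θ in (0:ℝ)..(2*Real.pi),
      ((1 + ρ₁ ^ 2 - 2 * ρ₁ * Real.cos (θ - μ₁)) *
        (1 + ρ₂ ^ 2 - 2 * ρ₂ * Real.cos (θ - μ₂)))⁻¹)
      = ∫ θ in (0:ℝ)..(2*Real.pi),
        ((‖circleMap 0 1 θ - a‖)^2 * (‖circleMap 0 1 θ - b‖)^2)⁻¹ := by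
    refine intervalIntegral.integral_congr fun θ _ => ?_
    rw [ewc_abs_sq, ewc_abs_sq]
  rw [hcongr, ewc_circle a b ha hb, hAa, hAb, ewc_abs_K]
  -- final scalar computation
  have hr : ρ₁ * ρ₂ < 1 := by
    calc ρ₁ * ρ₂ ≤ ρ₁ * 1 := mul_le_mul_of_nonneg_left hρ₂1.le hρ₁0
    _ = ρ₁ := mul_one _
    _ < 1 := hρ₁1
  have hK : 0 < 1 + ρ₁^2*ρ₂^2 - 2*ρ₁*ρ₂*Real.cos (μ₁ - μ₂) := by
    nlinarith [Real.cos_le_one (μ₁ - μ₂), mul_nonneg hρ₁0 hρ₂0, sq_nonneg (1 - ρ₁*ρ₂)]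
  have h1 : (1:ℝ) - ρ₁^2 ≠ 0 := by nlinarith
  have h2 : (1:ℝ) - ρ₂^2 ≠ 0 := by nlinarith
  have hrr : (ρ₁*ρ₂)*(ρ₁*ρ₂) < 1 := by nlinarith [mul_nonneg hρ₁0 hρ₂0]
  have h3 : (1:ℝ) - ρ₁^2*ρ₂^2 ≠ 0 := by nlinarith [hrr]
  rw [ewcC]
  field_simp
  try ring
  field_simp [ne_of_gt (show 0 < 1 - ρ₁ * ρ₂ * Real.cos (μ₁ - μ₂) * 2 + ρ₁ ^ 2 * ρ₂ ^ 2 by linarith)]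
  ring
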